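/- Define T : L¹[0,1] → L¹[0,1] by (Tf)(t) = 2f(2t) for t ∈ [0,1/2] and (Tf)(t) = 0 for t ∈ (1/2,1]. Let C := {f ∈ L¹[0,1] : f ≥ 0 a.e. and ∫₀¹ f = 1}. Then: (i) T is a linear isometry of L¹[0,1]; (ii) T maps C into C; (iii) T has no fixed point in C. Consequently, the norm-closed convex bounded set C fails the fixed point property for affine nonexpansive mappings. -/
import Mathlib

open MeasureTheory Filter Topology

/-- Lebesgue measure on `[0,1]`. -/
noncomputable def μ01 : Measure ℝ := volume.restrict (Set.Icc 0 1)

instance : IsFiniteMeasure μ01 := by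
  constructor
  simp [μ01, Real.volume_Icc]

/-- `C = {f ∈ L¹[0,1] : f ≥ 0 a.e., ∫ f = 1}`. -/
noncomputable def posProbC : Set (Lp ℝ 1 μ01) :=
  {f | (∀ᵐ t ∂μ01, 0 ≤ f t) ∧ ∫ t, f t ∂μ01 = 1}

lemma ae_comp_half {p : ℝ → Prop} (h : ∀ᵐ t ∂μ01, p t) :
    ∀ᵐ t ∂μ01, t ≤ 1 / 2 → p (2 * t) := by
  rw [μ01, ae_restrict_iff' measurableSet_Icc] at h ⊢
  rw [ae_iff] at h ⊢
  have h2 : volume ((fun t : ℝ => 2 * t) ⁻¹' {a | ¬(a ∈ Set.Icc (0:ℝ) 1 → p a)}) = 0 := by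
    rw [Real.volume_preimage_mul_left two_ne_zero, h, mul_zero]
  refine measure_mono_null ?_ h2
  intro t ht
  simp only [Set.mem_setOf_eq, not_forall, Set.mem_preimage, Set.mem_Icc] at ht ⊢
  obtain ⟨⟨h0, h1⟩, ht2, ht3⟩ := ht
  exact ⟨⟨by linarith, by linarith⟩, ht3⟩

lemma subst_lemma (g : ℝ → ℝ) {b : ℝ} (hb : 0 ≤ b) :
    ∫ t in Set.Icc (0:ℝ) b, 2 * g (2 * t) = ∫ s in Set.Icc (0:ℝ) (2 * b), g s := by
  rw [MeasureTheory.integral_Icc_eq_integral_Ioc, MeasureTheory.integral_Icc_eq_integral_Ioc,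
    ← intervalIntegral.integral_of_le hb, ← intervalIntegral.integral_of_le (by linarith)]
  have h := intervalIntegral.smul_integral_comp_mul_left (f := g) (a := 0) (b := b) 2
  rw [mul_zero] at h
  rw [← h]
  rw [← intervalIntegral.integral_smul]
  simp [smul_eq_mul]

lemma main_int (g : ℝ → ℝ) :
    (∫ t, (if t ≤ 1 / 2 then 2 * g (2 * t) else 0) ∂μ01) = ∫ t, g t ∂μ01 := by
  have h1 : ∀ t : ℝ, (if t ≤ (1:ℝ) / 2 then 2 * g (2 * t) else 0) =
      Set.indicator (Set.Iic ((1:ℝ) / 2)) (fun t => 2 * g (2 * t)) t := by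
    intro t; rw [Set.indicator_apply]; rfl
  rw [μ01]
  simp_rw [h1]
  rw [MeasureTheory.setIntegral_indicator measurableSet_Iic]
  have h2 : Set.Icc (0:ℝ) 1 ∩ Set.Iic (1 / 2) = Set.Icc 0 (1 / 2) := by
    ext t
    simp only [Set.mem_inter_iff, Set.mem_Icc, Set.mem_Iic]
    constructor
    · rintro ⟨⟨a, b⟩, c⟩; exact ⟨a, c⟩
    · rintro ⟨a, b⟩; exact ⟨⟨a, by linarith⟩, b⟩
  rw [h2, subst_lemma g (by norm_num)]
  norm_num

/-- If `T : L¹[0,1] → L¹[0,1]` is given by `(Tf)(t) = 2 f(2t)` on `[0,1/2]` and `0` on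
`(1/2,1]`, then `T` is a linear isometry mapping `C` into `C` without fixed points in `C`;
consequently `C` fails the fixed point property for affine nonexpansive mappings. -/
theorem doubling_map_linear_isometry_no_fixedPoint
    (T : Lp ℝ 1 μ01 → Lp ℝ 1 μ01)
    (hT : ∀ f : Lp ℝ 1 μ01, ∀ᵐ t ∂μ01,
      (T f : ℝ → ℝ) t = if t ≤ 1 / 2 then 2 * (f : ℝ → ℝ) (2 * t) else 0) :
    (∀ f g : Lp ℝ 1 μ01, T (f + g) = T f + T g) ∧
    (∀ (c : ℝ) (f : Lp ℝ 1 μ01), T (c • f) = c • T f) ∧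
    (∀ f : Lp ℝ 1 μ01, ‖T f‖ = ‖f‖) ∧
    Set.MapsTo T posProbC posProbC ∧
    (∀ f ∈ posProbC, T f ≠ f) ∧
    ∃ S : Lp ℝ 1 μ01 → Lp ℝ 1 μ01, Set.MapsTo S posProbC posProbC ∧
      (∀ x ∈ posProbC, ∀ y ∈ posProbC, ∀ l : ℝ, 0 ≤ l → l ≤ 1 →
        S (l • x + (1 - l) • y) = l • S x + (1 - l) • S y) ∧
      (∀ x ∈ posProbC, ∀ y ∈ posProbC, ‖S x - S y‖ ≤ ‖x - y‖) ∧
      (∀ x ∈ posProbC, S x ≠ x) := by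
  -- additivity
  have hadd : ∀ f g : Lp ℝ 1 μ01, T (f + g) = T f + T g := by
    intro f g
    apply Lp.ext
    have h4 : ∀ᵐ t ∂μ01, ((f + g : Lp ℝ 1 μ01) : ℝ → ℝ) t = (f : ℝ → ℝ) t + (g : ℝ → ℝ) t :=
      Lp.coeFn_add f g
    filter_upwards [hT (f + g), hT f, hT g, ae_comp_half h4, Lp.coeFn_add (T f) (T g)]
      with t e1 e2 e3 e4 e5
    rw [e1, e5, Pi.add_apply, e2, e3]
    by_cases ht : t ≤ 1 / 2
    · rw [if_pos ht, if_pos ht, if_pos ht, e4 ht]; ring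
    · rw [if_neg ht, if_neg ht, if_neg ht]; ring
  -- smul
  have hsmul : ∀ (c : ℝ) (f : Lp ℝ 1 μ01), T (c • f) = c • T f := by
    intro c f
    apply Lp.ext
    have h4 : ∀ᵐ t ∂μ01, ((c • f : Lp ℝ 1 μ01) : ℝ → ℝ) t = c * (f : ℝ → ℝ) t :=
      Lp.coeFn_smul c f
    filter_upwards [hT (c • f), hT f, ae_comp_half h4, Lp.coeFn_smul c (T f)]
      with t e1 e2 e3 e4
    rw [e1, e4, Pi.smul_apply, smul_eq_mul, e2]
    by_cases ht : t ≤ 1 / 2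
    · rw [if_pos ht, if_pos ht, e3 ht]; ring
    · rw [if_neg ht, if_neg ht, mul_zero]
  -- norm
  have hnorm : ∀ f : Lp ℝ 1 μ01, ‖T f‖ = ‖f‖ := by
    intro f
    rw [L1.norm_eq_integral_norm, L1.norm_eq_integral_norm]
    have h : ∫ t, ‖(T f : ℝ → ℝ) t‖ ∂μ01
        = ∫ t, (if t ≤ 1 / 2 then 2 * ‖(f : ℝ → ℝ) (2 * t)‖ else 0) ∂μ01 := by
      apply integral_congr_ae
      filter_upwards [hT f] with t e
      rw [e]
      by_cases ht : t ≤ 1 / 2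
      · rw [if_pos ht, if_pos ht, Real.norm_eq_abs, Real.norm_eq_abs, abs_mul, abs_two]
      · rw [if_neg ht, if_neg ht, norm_zero]
    exact h.trans (main_int fun s => ‖(f : ℝ → ℝ) s‖)
  -- maps to
  have hmaps : Set.MapsTo T posProbC posProbC := by
    rintro f ⟨hpos, hint⟩
    constructor
    · filter_upwards [hT f, ae_comp_half hpos] with t e1 e2
      rw [e1]
      by_cases ht : t ≤ 1 / 2
      · rw [if_pos ht]; linarith [e2 ht]
      · rw [if_neg ht]
    · rw [integral_congr_ae (hT f), main_int, hint]
  -- no fixed point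
  have hnofix : ∀ f ∈ posProbC, T f ≠ f := by
    rintro f ⟨hpos, hint⟩ hfix
    have hf : ∀ᵐ t ∂μ01,
        (f : ℝ → ℝ) t = if t ≤ 1 / 2 then 2 * (f : ℝ → ℝ) (2 * t) else 0 := by
      have := hT f; rwa [hfix] at this
    have hf' : ∀ᵐ t ∂(volume.restrict (Set.Icc (0:ℝ) 1)),
        (f : ℝ → ℝ) t = if t ≤ 1 / 2 then 2 * (f : ℝ → ℝ) (2 * t) else 0 := hf
    have step : ∀ n : ℕ, ∫ t in Set.Icc (0:ℝ) ((1/2)^n), (f : ℝ → ℝ) t = 1 := by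
      intro n
      induction n with
      | zero => simpa [μ01] using hint
      | succ n ih =>
        have hble : ((1:ℝ)/2)^(n+1) ≤ 1/2 := by
          calc ((1:ℝ)/2)^(n+1) = (1/2)^n * (1/2) := by ring
          _ ≤ 1 * (1/2) := by
              apply mul_le_mul_of_nonneg_right _ (by norm_num)
              exact pow_le_one₀ (by norm_num) (by norm_num)
          _ = 1/2 := by ring
        have hsub : Set.Icc (0:ℝ) ((1/2)^(n+1)) ⊆ Set.Icc 0 1 :=
          Set.Icc_subset_Icc_right (by linarith)
        have hae := ae_restrict_of_ae_restrict_of_subset hsub hf'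
        have h1 : ∫ t in Set.Icc (0:ℝ) ((1/2)^(n+1)), (f : ℝ → ℝ) t
            = ∫ t in Set.Icc (0:ℝ) ((1/2)^(n+1)), 2 * (f : ℝ → ℝ) (2 * t) := by
          apply integral_congr_ae
          filter_upwards [hae, ae_restrict_mem measurableSet_Icc] with t e1 e2
          rw [e1, if_pos (le_trans e2.2 hble)]
        rw [h1, subst_lemma _ (by positivity)]
        have h2 : 2 * ((1:ℝ)/2)^(n+1) = (1/2)^n := by ring
        rw [h2]; exact ih
    -- the integrals of the truncations equal 1
    have eq1 : ∀ n : ℕ,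
        ∫ t, Set.indicator (Set.Icc (0:ℝ) ((1/2)^n)) (f : ℝ → ℝ) t ∂μ01 = 1 := by
      intro n
      rw [integral_indicator measurableSet_Icc]
      have : μ01.restrict (Set.Icc (0:ℝ) ((1/2)^n))
          = volume.restrict (Set.Icc (0:ℝ) ((1/2)^n)) := by
        rw [μ01, Measure.restrict_restrict measurableSet_Icc]
        congr 1
        apply Set.inter_eq_left.mpr
        exact Set.Icc_subset_Icc_right (pow_le_one₀ (by norm_num) (by norm_num))
      rw [this]
      exact step n
    -- but they tend to 0
    have h0 : ∀ᵐ t ∂μ01, t ≠ 0 := by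
      rw [ae_iff]
      have : {t : ℝ | ¬ t ≠ 0} = {0} := by ext t; simp
      rw [this, μ01, Measure.restrict_apply (MeasurableSet.singleton 0)]
      exact measure_mono_null Set.inter_subset_left Real.volume_singleton
    have hlim : Tendsto
        (fun n : ℕ => ∫ t, Set.indicator (Set.Icc (0:ℝ) ((1/2)^n)) (f : ℝ → ℝ) t ∂μ01)
        atTop (𝓝 (∫ _t, (0:ℝ) ∂μ01)) := by
      refine tendsto_integral_of_dominated_convergence (fun t => ‖(f : ℝ → ℝ) t‖)
        (fun n => (Lp.aestronglyMeasurable f).indicator measurableSet_Icc)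
        ((L1.integrable_coeFn f).norm) (fun n => ?_) ?_
      · filter_upwards with t
        by_cases h : t ∈ Set.Icc (0:ℝ) ((1/2)^n)
        · rw [Set.indicator_of_mem h]
        · rw [Set.indicator_of_notMem h, norm_zero]; exact norm_nonneg _
      · filter_upwards [h0] with t ht
        rcases lt_or_gt_of_ne ht with hlt | hgt
        · have hz : ∀ n : ℕ, Set.indicator (Set.Icc (0:ℝ) ((1/2)^n)) (f : ℝ → ℝ) t = 0 := by
            intro n
            apply Set.indicator_of_notMem
            intro hmem
            exact absurd hmem.1 (not_le.mpr hlt)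
          exact (tendsto_const_nhds : Tendsto (fun _n : ℕ => (0:ℝ)) atTop (𝓝 0)).congr
            fun n => (hz n).symm
        · have hpow : Tendsto (fun n : ℕ => ((1:ℝ)/2)^n) atTop (𝓝 0) :=
            tendsto_pow_atTop_nhds_zero_of_lt_one (by norm_num) (by norm_num)
          have hev : ∀ᶠ n in atTop,
              Set.indicator (Set.Icc (0:ℝ) ((1/2)^n)) (f : ℝ → ℝ) t = 0 := by
            filter_upwards [hpow.eventually (eventually_lt_nhds hgt)] with n hn
            apply Set.indicator_of_notMem
            intro hmem
            exact absurd hmem.2 (not_le.mpr hn)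
          exact Tendsto.congr' (hev.mono fun n hn => hn.symm) tendsto_const_nhds
    rw [integral_zero] at hlim
    have : Tendsto (fun _n : ℕ => (1:ℝ)) atTop (𝓝 0) := by
      refine hlim.congr fun n => ?_
      exact eq1 n
    have h10 := tendsto_nhds_unique this tendsto_const_nhds
    norm_num at h10
  refine ⟨hadd, hsmul, hnorm, hmaps, hnofix, T, hmaps, ?_, ?_, hnofix⟩
  · intro x _ y _ l _ _
    rw [hadd, hsmul, hsmul]
  · intro x _ y _
    have : T x - T y = T (x - y) := by
      rw [sub_eq_add_neg, sub_eq_add_neg, hadd, ← neg_one_smul ℝ y, hsmul, neg_one_smul]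
    rw [this, hnorm]
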